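/- Let U be a module over a unital bialgebra V = (V,·,Δ,1) (Δ an algebra map, not necessarily coassociative), let Φ ∈ V^{⊗3} be invertible, and let ∗: U⊗U → U be a V-module algebra product (v·(a∗b) = (v_(1)·a)∗(v_(2)·b)) satisfying Φ·(a∗(b∗c)) = (a∗b)∗c for all a,b,c ∈ U. Then for all a,b,c,d ∈ U one has ((a∗b)∗c)∗d = P(Φ)·(((a∗b)∗c)∗d), where P(Φ) = (Φ⊗1)⁻¹·((1⊗Δ⊗1)(Φ))⁻¹·(1⊗Φ)⁻¹·((1⊗1⊗Δ)(Φ))·((Δ⊗1⊗1)(Φ)) ∈ V^{⊗4} acts componentwise on the four tensor factors. -/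

import Mathlib

open scoped TensorProduct

noncomputable section

variable (k V U : Type*) [Field k] [CharZero k] [Ring V] [Algebra k V]
  [AddCommGroup U] [Module k U] [Module V U] [IsScalarTower k V U] [SMulCommClass k V U]

/-- `Φ ↦ Φ ⊗ 1 : V^⊗3 → V^⊗4`. -/
def tensorOne : V ⊗[k] (V ⊗[k] V) →ₐ[k] V ⊗[k] (V ⊗[k] (V ⊗[k] V)) :=
  Algebra.TensorProduct.map (AlgHom.id k V)
    (Algebra.TensorProduct.map (AlgHom.id k V)
      (Algebra.TensorProduct.includeLeft : V →ₐ[k] V ⊗[k] V))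

/-- `Φ ↦ 1 ⊗ Φ : V^⊗3 → V^⊗4`. -/
def oneTensor : V ⊗[k] (V ⊗[k] V) →ₐ[k] V ⊗[k] (V ⊗[k] (V ⊗[k] V)) :=
  Algebra.TensorProduct.includeRight

/-- `Δ ⊗ 1 ⊗ 1 : V^⊗3 → V^⊗4`. -/
def deltaFirst (Δ : V →ₐ[k] V ⊗[k] V) :
    V ⊗[k] (V ⊗[k] V) →ₐ[k] V ⊗[k] (V ⊗[k] (V ⊗[k] V)) :=
  (Algebra.TensorProduct.assoc k k k V V (V ⊗[k] V)).toAlgHom.comp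
    (Algebra.TensorProduct.map Δ (AlgHom.id k (V ⊗[k] V)))

/-- `1 ⊗ Δ ⊗ 1 : V^⊗3 → V^⊗4`. -/
def deltaSecond (Δ : V →ₐ[k] V ⊗[k] V) :
    V ⊗[k] (V ⊗[k] V) →ₐ[k] V ⊗[k] (V ⊗[k] (V ⊗[k] V)) :=
  Algebra.TensorProduct.map (AlgHom.id k V)
    ((Algebra.TensorProduct.assoc k k k V V V).toAlgHom.comp
      (Algebra.TensorProduct.map Δ (AlgHom.id k V)))

/-- `1 ⊗ 1 ⊗ Δ : V^⊗3 → V^⊗4`. -/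
def deltaThird (Δ : V →ₐ[k] V ⊗[k] V) :
    V ⊗[k] (V ⊗[k] V) →ₐ[k] V ⊗[k] (V ⊗[k] (V ⊗[k] V)) :=
  Algebra.TensorProduct.map (AlgHom.id k V)
    (Algebra.TensorProduct.map (AlgHom.id k V) Δ)

/-- The drinfeld element
`P(Φ) = (Φ⊗1)⁻¹·((1⊗Δ⊗1)Φ)⁻¹·(1⊗Φ)⁻¹·((1⊗1⊗Δ)Φ)·((Δ⊗1⊗1)Φ) ∈ V^⊗4`,
for an invertible `Φ ∈ V^⊗3`. -/
def Pphi (Δ : V →ₐ[k] V ⊗[k] V) (Φ : (V ⊗[k] (V ⊗[k] V))ˣ) :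
    (V ⊗[k] (V ⊗[k] (V ⊗[k] V)))ˣ :=
  (Units.map (tensorOne k V).toRingHom.toMonoidHom Φ)⁻¹ *
    (Units.map (deltaSecond k V Δ).toRingHom.toMonoidHom Φ)⁻¹ *
    (Units.map (oneTensor k V).toRingHom.toMonoidHom Φ)⁻¹ *
    Units.map (deltaThird k V Δ).toRingHom.toMonoidHom Φ *
    Units.map (deltaFirst k V Δ).toRingHom.toMonoidHom Φ

/-- The `k`-linear action map `V → End_k(U)`, `v ↦ (v • ·)`. -/
def actV : V →ₗ[k] U →ₗ[k] U :=
  LinearMap.mk₂ k (fun v u => v • u) (fun v w u => add_smul v w u)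
    (fun c v u => smul_assoc c v u) (fun v u w => smul_add v u w)
    (fun c v u => (smul_comm c v u).symm)

/-- Componentwise action of `V⊗V` on `U⊗U`. -/
def act2 : V ⊗[k] V →ₗ[k] U ⊗[k] U →ₗ[k] U ⊗[k] U :=
  (TensorProduct.homTensorHomMap (RingHom.id k) U U U U).comp (TensorProduct.map (actV k V U) (actV k V U))

/-- Componentwise action of `V^⊗3` on `U^⊗3`. -/
def act3 : V ⊗[k] (V ⊗[k] V) →ₗ[k]
    U ⊗[k] (U ⊗[k] U) →ₗ[k] U ⊗[k] (U ⊗[k] U) :=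
  (TensorProduct.homTensorHomMap (RingHom.id k) U (U ⊗[k] U) U (U ⊗[k] U)).comp
    (TensorProduct.map (actV k V U) (act2 k V U))

/-- Componentwise action of `V^⊗4` on `U^⊗4`. -/
def act4 : V ⊗[k] (V ⊗[k] (V ⊗[k] V)) →ₗ[k]
    U ⊗[k] (U ⊗[k] (U ⊗[k] U)) →ₗ[k] U ⊗[k] (U ⊗[k] (U ⊗[k] U)) :=
  (TensorProduct.homTensorHomMap (RingHom.id k) U (U ⊗[k] (U ⊗[k] U)) U (U ⊗[k] (U ⊗[k] U))).comp
    (TensorProduct.map (actV k V U) (act3 k V U))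

variable {k U} in
/-- The product `∗ : U ⊗ U → U` induced by a bilinear map `mul`. -/
def m2 (mul : U →ₗ[k] U →ₗ[k] U) : U ⊗[k] U →ₗ[k] U := TensorProduct.lift mul

variable {k U} in
/-- `a ⊗ (b ⊗ c) ↦ a ∗ (b ∗ c)`. -/
def mR3 (mul : U →ₗ[k] U →ₗ[k] U) : U ⊗[k] (U ⊗[k] U) →ₗ[k] U :=
  (m2 mul).comp (TensorProduct.map LinearMap.id (m2 mul))

variable {k U} in
/-- `a ⊗ (b ⊗ c) ↦ (a ∗ b) ∗ c`. -/
def mL3 (mul : U →ₗ[k] U →ₗ[k] U) : U ⊗[k] (U ⊗[k] U) →ₗ[k] U :=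
  (m2 mul).comp ((TensorProduct.map (m2 mul) LinearMap.id).comp
    (TensorProduct.assoc k U U U).symm.toLinearMap)

variable {k U} in
/-- `a ⊗ (b ⊗ (c ⊗ d)) ↦ ((a ∗ b) ∗ c) ∗ d`. -/
def mL4 (mul : U →ₗ[k] U →ₗ[k] U) : U ⊗[k] (U ⊗[k] (U ⊗[k] U)) →ₗ[k] U :=
  (mL3 mul).comp ((TensorProduct.map (m2 mul) LinearMap.id).comp
    (TensorProduct.assoc k U U (U ⊗[k] U)).symm.toLinearMap)

set_option linter.unusedSectionVars false
set_option synthInstance.maxHeartbeats 1000000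
set_option maxHeartbeats 1600000


instance : LeftDistribClass (V ⊗[k] (V ⊗[k] (V ⊗[k] V))) := by
  exact Distrib.leftDistribClass (V ⊗[k] (V ⊗[k] (V ⊗[k] V)))
instance : RightDistribClass (V ⊗[k] (V ⊗[k] (V ⊗[k] V))) := by
  exact Distrib.rightDistribClass (V ⊗[k] (V ⊗[k] (V ⊗[k] V)))
instance : MulZeroClass (V ⊗[k] (V ⊗[k] (V ⊗[k] V))) := by
  exact inferInstance

/-! ### Auxiliary lemmas -/

lemma actV_apply (v : V) (u : U) : actV k V U v u = v • u := rfl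

lemma actV_one : actV k V U 1 = LinearMap.id :=
  LinearMap.ext fun u => one_smul V u

lemma actV_mul (v w : V) : actV k V U (v * w) = actV k V U v ∘ₗ actV k V U w :=
  LinearMap.ext fun u => mul_smul v w u

lemma act2_tmul (v w : V) :
    act2 k V U (v ⊗ₜ w) = TensorProduct.map (actV k V U v) (actV k V U w) := by
  simp [act2]

lemma act2_one : act2 k V U 1 = LinearMap.id := by
  rw [Algebra.TensorProduct.one_def, act2_tmul, actV_one, TensorProduct.map_id]

lemma act2_mul (x y : V ⊗[k] V) :
    act2 k V U (x * y) = act2 k V U x ∘ₗ act2 k V U y := by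
  induction x using TensorProduct.induction_on with
  | zero => simp
  | tmul v w =>
    induction y using TensorProduct.induction_on with
    | zero => simp
    | tmul v' w' =>
      rw [Algebra.TensorProduct.tmul_mul_tmul, act2_tmul, act2_tmul, act2_tmul,
        actV_mul, actV_mul, TensorProduct.map_comp]
    | add y₁ y₂ h₁ h₂ => rw [mul_add, map_add, h₁, h₂, map_add, LinearMap.comp_add]
  | add x₁ x₂ h₁ h₂ => rw [add_mul, map_add, h₁, h₂, map_add, LinearMap.add_comp]

lemma act3_tmul (v : V) (y : V ⊗[k] V) :
    act3 k V U (v ⊗ₜ y) = TensorProduct.map (actV k V U v) (act2 k V U y) := by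
  simp [act3]

lemma act3_one : act3 k V U 1 = LinearMap.id := by
  rw [Algebra.TensorProduct.one_def, act3_tmul, actV_one, act2_one, TensorProduct.map_id]

lemma act3_mul (x y : V ⊗[k] (V ⊗[k] V)) :
    act3 k V U (x * y) = act3 k V U x ∘ₗ act3 k V U y := by
  induction x using TensorProduct.induction_on with
  | zero => simp
  | tmul v w =>
    induction y using TensorProduct.induction_on with
    | zero => simp
    | tmul v' w' =>
      rw [Algebra.TensorProduct.tmul_mul_tmul, act3_tmul, act3_tmul, act3_tmul,
        actV_mul, act2_mul, TensorProduct.map_comp]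
    | add y₁ y₂ h₁ h₂ => rw [mul_add, map_add, h₁, h₂, map_add, LinearMap.comp_add]
  | add x₁ x₂ h₁ h₂ => rw [add_mul, map_add, h₁, h₂, map_add, LinearMap.add_comp]

lemma act4_tmul (v : V) (y : V ⊗[k] (V ⊗[k] V)) :
    act4 k V U (v ⊗ₜ y) = TensorProduct.map (actV k V U v) (act3 k V U y) := by
  simp [act4]

lemma act4_one : act4 k V U 1 = LinearMap.id := by
  rw [Algebra.TensorProduct.one_def, act4_tmul, actV_one, act3_one, TensorProduct.map_id]

lemma act4_mul (x y : V ⊗[k] (V ⊗[k] (V ⊗[k] V))) :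
    act4 k V U (x * y) = act4 k V U x ∘ₗ act4 k V U y := by
  induction x using TensorProduct.induction_on with
  | zero => simp
  | tmul v w =>
    induction y using TensorProduct.induction_on with
    | zero => simp
    | tmul v' w' =>
      rw [Algebra.TensorProduct.tmul_mul_tmul, act4_tmul, act4_tmul, act4_tmul,
        actV_mul, act3_mul, TensorProduct.map_comp]
    | add y₁ y₂ h₁ h₂ => rw [mul_add, map_add, h₁, h₂, map_add, LinearMap.comp_add]
  | add x₁ x₂ h₁ h₂ => rw [add_mul, map_add, h₁, h₂, map_add, LinearMap.add_comp]

/-! ### Reassociation maps on `U^⊗4` -/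

/-- `a ⊗ (b ⊗ (c ⊗ d)) ↦ a ⊗ ((b ⊗ c) ⊗ d)`. -/
def rho4L : U ⊗[k] (U ⊗[k] (U ⊗[k] U)) →ₗ[k] U ⊗[k] ((U ⊗[k] U) ⊗[k] U) :=
  TensorProduct.map LinearMap.id (TensorProduct.assoc k U U U).symm.toLinearMap

/-- `a ⊗ (b ⊗ (c ⊗ d)) ↦ (a ⊗ (b ⊗ c)) ⊗ d`. -/
def sig4L : U ⊗[k] (U ⊗[k] (U ⊗[k] U)) →ₗ[k] (U ⊗[k] (U ⊗[k] U)) ⊗[k] U :=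
  (TensorProduct.assoc k U (U ⊗[k] U) U).symm.toLinearMap ∘ₗ rho4L k U

/-- `a ⊗ (b ⊗ (c ⊗ d)) ↦ (a ⊗ b) ⊗ (c ⊗ d)`. -/
def tau4L : U ⊗[k] (U ⊗[k] (U ⊗[k] U)) →ₗ[k] (U ⊗[k] U) ⊗[k] (U ⊗[k] U) :=
  (TensorProduct.assoc k U U (U ⊗[k] U)).symm.toLinearMap

lemma rho4L_tmul (a b c d : U) :
    rho4L k U (a ⊗ₜ (b ⊗ₜ (c ⊗ₜ d))) = a ⊗ₜ ((b ⊗ₜ c) ⊗ₜ d) := by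
  simp [rho4L]

lemma sig4L_tmul (a b c d : U) :
    sig4L k U (a ⊗ₜ (b ⊗ₜ (c ⊗ₜ d))) = (a ⊗ₜ (b ⊗ₜ c)) ⊗ₜ d := by
  simp [sig4L, rho4L]

lemma tau4L_tmul (a b c d : U) :
    tau4L k U (a ⊗ₜ (b ⊗ₜ (c ⊗ₜ d))) = (a ⊗ₜ b) ⊗ₜ (c ⊗ₜ d) := by
  simp [tau4L]

lemma m2_tmul {mul : U →ₗ[k] U →ₗ[k] U} (a b : U) : m2 mul (a ⊗ₜ b) = mul a b := rfl

/-! ### Naturality of the reassociations with respect to componentwise actions -/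

lemma L_tau (z y : V ⊗[k] V) :
    TensorProduct.map (act2 k V U z) (act2 k V U y) ∘ₗ tau4L k U
      = tau4L k U ∘ₗ
        act4 k V U (Algebra.TensorProduct.assoc k k k V V (V ⊗[k] V) (z ⊗ₜ y)) := by
  induction z using TensorProduct.induction_on with
  | zero =>
    simp [TensorProduct.zero_tmul, TensorProduct.map_zero_left]
  | tmul w₁ w₂ =>
    rw [Algebra.TensorProduct.assoc_tmul, act4_tmul, act3_tmul, act2_tmul]
    ext a b c d
    simp [tau4L, actV_apply]
  | add z₁ z₂ h₁ h₂ =>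
    simp only [TensorProduct.add_tmul, map_add, TensorProduct.map_add_left,
      LinearMap.add_comp, LinearMap.comp_add, h₁, h₂]

lemma L_rho (v z : V) (z' : V ⊗[k] V) :
    TensorProduct.map (actV k V U v)
        (TensorProduct.map (act2 k V U z') (actV k V U z)) ∘ₗ rho4L k U
      = rho4L k U ∘ₗ
        act4 k V U (v ⊗ₜ (Algebra.TensorProduct.assoc k k k V V V (z' ⊗ₜ z))) := by
  induction z' using TensorProduct.induction_on with
  | zero =>
    simp [TensorProduct.zero_tmul, TensorProduct.tmul_zero,
      TensorProduct.map_zero_left, TensorProduct.map_zero_right]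
  | tmul w₁ w₂ =>
    rw [Algebra.TensorProduct.assoc_tmul, act4_tmul, act3_tmul, act2_tmul, act2_tmul]
    ext a b c d
    simp [rho4L, actV_apply]
  | add z₁ z₂ h₁ h₂ =>
    simp only [TensorProduct.add_tmul, TensorProduct.tmul_add, map_add,
      TensorProduct.map_add_left, TensorProduct.map_add_right,
      LinearMap.add_comp, LinearMap.comp_add, h₁, h₂]

/-! ### Commutation of the four-fold action with partial multiplications -/

lemma C_dF (mul : U →ₗ[k] U →ₗ[k] U) (Δ : V →ₐ[k] V ⊗[k] V)
    (hm : ∀ (v : V) (x : U ⊗[k] U), v • m2 mul x = m2 mul (act2 k V U (Δ v) x))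
    (x : V ⊗[k] (V ⊗[k] V)) :
    act3 k V U x ∘ₗ (TensorProduct.map (m2 mul) LinearMap.id ∘ₗ tau4L k U)
      = (TensorProduct.map (m2 mul) LinearMap.id ∘ₗ tau4L k U) ∘ₗ
          act4 k V U (deltaFirst k V Δ x) := by
  induction x using TensorProduct.induction_on with
  | zero => simp
  | add x₁ x₂ h₁ h₂ =>
    simp only [map_add, LinearMap.add_comp, LinearMap.comp_add, h₁, h₂]
  | tmul v y =>
    have hdf : deltaFirst k V Δ (v ⊗ₜ y)
        = Algebra.TensorProduct.assoc k k k V V (V ⊗[k] V) (Δ v ⊗ₜ y) := by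
      simp [deltaFirst]
    have h1 : TensorProduct.map (actV k V U v) (act2 k V U y) ∘ₗ
          TensorProduct.map (m2 mul) LinearMap.id
        = TensorProduct.map (m2 mul) LinearMap.id ∘ₗ
          TensorProduct.map (act2 k V U (Δ v)) (act2 k V U y) := by
      rw [← TensorProduct.map_comp, ← TensorProduct.map_comp,
        LinearMap.comp_id, LinearMap.id_comp]
      congr 1
      exact LinearMap.ext fun s => hm v s
    refine LinearMap.ext fun t => ?_
    have e1 := LinearMap.congr_fun h1 (tau4L k U t)
    have e2 := LinearMap.congr_fun (L_tau k V U (Δ v) y) t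
    simp only [LinearMap.comp_apply] at e1 e2 ⊢
    rw [act3_tmul, e1, e2, hdf]

lemma C_dS (mul : U →ₗ[k] U →ₗ[k] U) (Δ : V →ₐ[k] V ⊗[k] V)
    (hm : ∀ (v : V) (x : U ⊗[k] U), v • m2 mul x = m2 mul (act2 k V U (Δ v) x))
    (x : V ⊗[k] (V ⊗[k] V)) :
    act3 k V U x ∘ₗ
        (TensorProduct.map LinearMap.id (TensorProduct.map (m2 mul) LinearMap.id) ∘ₗ
          rho4L k U)
      = (TensorProduct.map LinearMap.id (TensorProduct.map (m2 mul) LinearMap.id) ∘ₗ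
          rho4L k U) ∘ₗ act4 k V U (deltaSecond k V Δ x) := by
  induction x using TensorProduct.induction_on with
  | zero => simp
  | add x₁ x₂ h₁ h₂ =>
    simp only [map_add, LinearMap.add_comp, LinearMap.comp_add, h₁, h₂]
  | tmul v y =>
    induction y using TensorProduct.induction_on with
    | zero => simp [TensorProduct.tmul_zero]
    | add y₁ y₂ h₁ h₂ =>
      simp only [TensorProduct.tmul_add, map_add, LinearMap.add_comp,
        LinearMap.comp_add, h₁, h₂]
    | tmul w z =>
      have hds : deltaSecond k V Δ (v ⊗ₜ (w ⊗ₜ z))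
          = v ⊗ₜ (Algebra.TensorProduct.assoc k k k V V V (Δ w ⊗ₜ z)) := by
        simp [deltaSecond]
      have h1 : TensorProduct.map (actV k V U v) (act2 k V U (w ⊗ₜ z)) ∘ₗ
            TensorProduct.map LinearMap.id (TensorProduct.map (m2 mul) LinearMap.id)
          = TensorProduct.map LinearMap.id (TensorProduct.map (m2 mul) LinearMap.id) ∘ₗ
            TensorProduct.map (actV k V U v)
              (TensorProduct.map (act2 k V U (Δ w)) (actV k V U z)) := by
        rw [act2_tmul, ← TensorProduct.map_comp, ← TensorProduct.map_comp,
          ← TensorProduct.map_comp, ← TensorProduct.map_comp,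
          LinearMap.comp_id, LinearMap.comp_id, LinearMap.id_comp, LinearMap.id_comp]
        congr 2
        exact LinearMap.ext fun s => hm w s
      refine LinearMap.ext fun t => ?_
      have e1 := LinearMap.congr_fun h1 (rho4L k U t)
      have e2 := LinearMap.congr_fun (L_rho k V U v z (Δ w)) t
      simp only [LinearMap.comp_apply] at e1 e2 ⊢
      rw [act3_tmul, e1, e2, hds]

lemma C_dT (mul : U →ₗ[k] U →ₗ[k] U) (Δ : V →ₐ[k] V ⊗[k] V)
    (hm : ∀ (v : V) (x : U ⊗[k] U), v • m2 mul x = m2 mul (act2 k V U (Δ v) x))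
    (x : V ⊗[k] (V ⊗[k] V)) :
    act3 k V U x ∘ₗ
        TensorProduct.map LinearMap.id (TensorProduct.map LinearMap.id (m2 mul))
      = TensorProduct.map LinearMap.id (TensorProduct.map LinearMap.id (m2 mul)) ∘ₗ
          act4 k V U (deltaThird k V Δ x) := by
  induction x using TensorProduct.induction_on with
  | zero => simp
  | add x₁ x₂ h₁ h₂ =>
    simp only [map_add, LinearMap.add_comp, LinearMap.comp_add, h₁, h₂]
  | tmul v y =>
    induction y using TensorProduct.induction_on with
    | zero => simp [TensorProduct.tmul_zero]
    | add y₁ y₂ h₁ h₂ =>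
      simp only [TensorProduct.tmul_add, map_add, LinearMap.add_comp,
        LinearMap.comp_add, h₁, h₂]
    | tmul w z =>
      have hdt : deltaThird k V Δ (v ⊗ₜ (w ⊗ₜ z)) = v ⊗ₜ (w ⊗ₜ (Δ z)) := by
        simp [deltaThird]
      rw [hdt, act3_tmul, act2_tmul, act4_tmul, act3_tmul,
        ← TensorProduct.map_comp, ← TensorProduct.map_comp,
        ← TensorProduct.map_comp, ← TensorProduct.map_comp,
        LinearMap.comp_id, LinearMap.comp_id, LinearMap.id_comp, LinearMap.id_comp]
      congr 2
      exact LinearMap.ext fun s => hm z s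

lemma C_tO (mul : U →ₗ[k] U →ₗ[k] U) (x : V ⊗[k] (V ⊗[k] V)) :
    TensorProduct.map (act3 k V U x) LinearMap.id ∘ₗ sig4L k U
      = sig4L k U ∘ₗ act4 k V U (tensorOne k V x) := by
  induction x using TensorProduct.induction_on with
  | zero => simp [TensorProduct.map_zero_left]
  | add x₁ x₂ h₁ h₂ =>
    simp only [map_add, TensorProduct.map_add_left, LinearMap.add_comp,
      LinearMap.comp_add, h₁, h₂]
  | tmul v y =>
    induction y using TensorProduct.induction_on with
    | zero =>
      simp [TensorProduct.tmul_zero, TensorProduct.map_zero_right,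
        TensorProduct.map_zero_left]
    | add y₁ y₂ h₁ h₂ =>
      simp only [TensorProduct.tmul_add, map_add, TensorProduct.map_add_right,
        TensorProduct.map_add_left, LinearMap.add_comp, LinearMap.comp_add, h₁, h₂]
    | tmul w z =>
      have hto : tensorOne k V (v ⊗ₜ (w ⊗ₜ z)) = v ⊗ₜ (w ⊗ₜ (z ⊗ₜ (1 : V))) := by
        simp [tensorOne]
      rw [hto, act3_tmul, act2_tmul, act4_tmul, act3_tmul, act2_tmul]
      ext a b c d
      simp [sig4L, rho4L, actV_apply]

lemma C_oT (x : V ⊗[k] (V ⊗[k] V)) :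
    act4 k V U (oneTensor k V x) = TensorProduct.map LinearMap.id (act3 k V U x) := by
  have h : oneTensor k V x = (1 : V) ⊗ₜ x := rfl
  rw [h, act4_tmul, actV_one]

/-! ### Reassociation identities between the bracketing shapes -/

lemma E1 (mul : U →ₗ[k] U →ₗ[k] U) :
    mL4 mul = m2 mul ∘ₗ (TensorProduct.map (mL3 mul) LinearMap.id ∘ₗ sig4L k U) := by
  ext a b c d
  simp [mL4, mL3, mR3, m2, sig4L, rho4L, tau4L]

lemma E2 (mul : U →ₗ[k] U →ₗ[k] U) :
    mR3 mul ∘ₗ (TensorProduct.map (m2 mul) LinearMap.id ∘ₗ tau4L k U)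
      = mL3 mul ∘ₗ
          TensorProduct.map LinearMap.id (TensorProduct.map LinearMap.id (m2 mul)) := by
  ext a b c d
  simp [mL3, mR3, m2, tau4L]

lemma E3 (mul : U →ₗ[k] U →ₗ[k] U) :
    m2 mul ∘ₗ (TensorProduct.map (mR3 mul) LinearMap.id ∘ₗ sig4L k U)
      = mL3 mul ∘ₗ
          (TensorProduct.map LinearMap.id (TensorProduct.map (m2 mul) LinearMap.id) ∘ₗ
            rho4L k U) := by
  ext a b c d
  simp [mL3, mR3, m2, sig4L, rho4L]

lemma E4 (mul : U →ₗ[k] U →ₗ[k] U) :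
    mR3 mul ∘ₗ
        (TensorProduct.map LinearMap.id (TensorProduct.map (m2 mul) LinearMap.id) ∘ₗ
          rho4L k U)
      = m2 mul ∘ₗ TensorProduct.map LinearMap.id (mL3 mul) := by
  ext a b c d
  simp [mL3, mR3, m2, rho4L]

lemma E5 (mul : U →ₗ[k] U →ₗ[k] U) :
    m2 mul ∘ₗ TensorProduct.map LinearMap.id (mR3 mul)
      = mR3 mul ∘ₗ
          TensorProduct.map LinearMap.id (TensorProduct.map LinearMap.id (m2 mul)) := by
  ext a b c d
  simp [mR3, m2]

lemma E0 (mul : U →ₗ[k] U →ₗ[k] U) :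
    mL4 mul = mL3 mul ∘ₗ (TensorProduct.map (m2 mul) LinearMap.id ∘ₗ tau4L k U) := rfl

lemma Esplit (f : U ⊗[k] (U ⊗[k] U) →ₗ[k] U)
    (g : U ⊗[k] (U ⊗[k] U) →ₗ[k] U ⊗[k] (U ⊗[k] U)) :
    TensorProduct.map (f ∘ₗ g) (LinearMap.id : U →ₗ[k] U)
      = TensorProduct.map f LinearMap.id ∘ₗ TensorProduct.map g LinearMap.id := by
  rw [← TensorProduct.map_comp, LinearMap.comp_id]

lemma Esplit2 (f : U ⊗[k] (U ⊗[k] U) →ₗ[k] U)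
    (g : U ⊗[k] (U ⊗[k] U) →ₗ[k] U ⊗[k] (U ⊗[k] U)) :
    TensorProduct.map (LinearMap.id : U →ₗ[k] U) (f ∘ₗ g)
      = TensorProduct.map LinearMap.id f ∘ₗ TensorProduct.map LinearMap.id g := by
  rw [← TensorProduct.map_comp, LinearMap.comp_id]

/-- Let `U` be a module over a unital bialgebra `V` (with `Δ` an algebra map, not
necessarily coassociative), `Φ ∈ V^⊗3` invertible, and `∗` a `V`-module algebra
product on `U` satisfying `Φ·(a∗(b∗c)) = (a∗b)∗c`.  Then
`((a∗b)∗c)∗d = P(Φ)·(((a∗b)∗c)∗d)` for all `a,b,c,d ∈ U`, where `P(Φ) ∈ V^⊗4`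
acts componentwise on the four tensor factors. -/
theorem quasiassoc_four_fold (Δ : V →ₐ[k] V ⊗[k] V)
    (Φ : (V ⊗[k] (V ⊗[k] V))ˣ) (mul : U →ₗ[k] U →ₗ[k] U)
    (hmodalg : ∀ (v : V) (x : U ⊗[k] U), v • m2 mul x = m2 mul (act2 k V U (Δ v) x))
    (hPhi : ∀ t : U ⊗[k] (U ⊗[k] U),
      mR3 mul (act3 k V U (Φ : V ⊗[k] (V ⊗[k] V)) t) = mL3 mul t) :
    ∀ t : U ⊗[k] (U ⊗[k] (U ⊗[k] U)),
      mL4 mul t =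
        mL4 mul (act4 k V U ((Pphi k V Δ Φ : (V ⊗[k] (V ⊗[k] (V ⊗[k] V)))ˣ) : _) t) := by
  intro t
  have Φ₀ : V ⊗[k] (V ⊗[k] V) := (Φ : V ⊗[k] (V ⊗[k] V))
  have hP : mR3 mul ∘ₗ act3 k V U (Φ : V ⊗[k] (V ⊗[k] V)) = mL3 mul :=
    LinearMap.ext fun s => hPhi s
  -- Path A : `((a*b)*c)*d = ((Δ⊗1⊗1)Φ · (1⊗1⊗Δ)Φ) ▸ (a*(b*(c*d)))`-shape
  have pathA : mL4 mul
      = mR3 mul ∘ₗ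
          (TensorProduct.map LinearMap.id (TensorProduct.map LinearMap.id (m2 mul)) ∘ₗ
            (act4 k V U (deltaThird k V Δ (Φ : V ⊗[k] (V ⊗[k] V))) ∘ₗ
              act4 k V U (deltaFirst k V Δ (Φ : V ⊗[k] (V ⊗[k] V))))) := by
    calc mL4 mul
        = mL3 mul ∘ₗ (TensorProduct.map (m2 mul) LinearMap.id ∘ₗ tau4L k U) :=
          E0 k U mul
      _ = (mR3 mul ∘ₗ act3 k V U (Φ : V ⊗[k] (V ⊗[k] V))) ∘ₗ
            (TensorProduct.map (m2 mul) LinearMap.id ∘ₗ tau4L k U) := by rw [hP]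
      _ = mR3 mul ∘ₗ (act3 k V U (Φ : V ⊗[k] (V ⊗[k] V)) ∘ₗ
            (TensorProduct.map (m2 mul) LinearMap.id ∘ₗ tau4L k U)) := by
          simp only [LinearMap.comp_assoc]
      _ = mR3 mul ∘ₗ ((TensorProduct.map (m2 mul) LinearMap.id ∘ₗ tau4L k U) ∘ₗ
            act4 k V U (deltaFirst k V Δ (Φ : V ⊗[k] (V ⊗[k] V)))) := by
          rw [C_dF k V U mul Δ hmodalg]
      _ = (mR3 mul ∘ₗ (TensorProduct.map (m2 mul) LinearMap.id ∘ₗ tau4L k U)) ∘ₗ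
            act4 k V U (deltaFirst k V Δ (Φ : V ⊗[k] (V ⊗[k] V))) := by
          simp only [LinearMap.comp_assoc]
      _ = (mL3 mul ∘ₗ
            TensorProduct.map LinearMap.id (TensorProduct.map LinearMap.id (m2 mul))) ∘ₗ
            act4 k V U (deltaFirst k V Δ (Φ : V ⊗[k] (V ⊗[k] V))) := by
          rw [E2 k U mul]
      _ = ((mR3 mul ∘ₗ act3 k V U (Φ : V ⊗[k] (V ⊗[k] V))) ∘ₗ
            TensorProduct.map LinearMap.id (TensorProduct.map LinearMap.id (m2 mul))) ∘ₗ
            act4 k V U (deltaFirst k V Δ (Φ : V ⊗[k] (V ⊗[k] V))) := by rw [hP]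
      _ = (mR3 mul ∘ₗ (act3 k V U (Φ : V ⊗[k] (V ⊗[k] V)) ∘ₗ
            TensorProduct.map LinearMap.id (TensorProduct.map LinearMap.id (m2 mul)))) ∘ₗ
            act4 k V U (deltaFirst k V Δ (Φ : V ⊗[k] (V ⊗[k] V))) := by
          simp only [LinearMap.comp_assoc]
      _ = (mR3 mul ∘ₗ
            (TensorProduct.map LinearMap.id (TensorProduct.map LinearMap.id (m2 mul)) ∘ₗ
              act4 k V U (deltaThird k V Δ (Φ : V ⊗[k] (V ⊗[k] V))))) ∘ₗ
            act4 k V U (deltaFirst k V Δ (Φ : V ⊗[k] (V ⊗[k] V))) := by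
          rw [C_dT k V U mul Δ hmodalg]
      _ = mR3 mul ∘ₗ
            (TensorProduct.map LinearMap.id (TensorProduct.map LinearMap.id (m2 mul)) ∘ₗ
              (act4 k V U (deltaThird k V Δ (Φ : V ⊗[k] (V ⊗[k] V))) ∘ₗ
                act4 k V U (deltaFirst k V Δ (Φ : V ⊗[k] (V ⊗[k] V))))) := by
          simp only [LinearMap.comp_assoc]
  -- Path B : `((a*b)*c)*d = ((Φ⊗1)·(1⊗Δ⊗1)Φ·(1⊗Φ)) ▸ (a*(b*(c*d)))`-shape
  have pathB : mL4 mul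
      = m2 mul ∘ₗ
          (TensorProduct.map LinearMap.id (mR3 mul) ∘ₗ
            (act4 k V U (oneTensor k V (Φ : V ⊗[k] (V ⊗[k] V))) ∘ₗ
              (act4 k V U (deltaSecond k V Δ (Φ : V ⊗[k] (V ⊗[k] V))) ∘ₗ
                act4 k V U (tensorOne k V (Φ : V ⊗[k] (V ⊗[k] V)))))) := by
    calc mL4 mul
        = m2 mul ∘ₗ (TensorProduct.map (mL3 mul) LinearMap.id ∘ₗ sig4L k U) :=
          E1 k U mul
      _ = m2 mul ∘ₗ
            (TensorProduct.map (mR3 mul ∘ₗ act3 k V U (Φ : V ⊗[k] (V ⊗[k] V)))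
              LinearMap.id ∘ₗ sig4L k U) := by rw [hP]
      _ = m2 mul ∘ₗ ((TensorProduct.map (mR3 mul) LinearMap.id ∘ₗ
            TensorProduct.map (act3 k V U (Φ : V ⊗[k] (V ⊗[k] V))) LinearMap.id) ∘ₗ
            sig4L k U) := by rw [Esplit]
      _ = m2 mul ∘ₗ (TensorProduct.map (mR3 mul) LinearMap.id ∘ₗ
            (TensorProduct.map (act3 k V U (Φ : V ⊗[k] (V ⊗[k] V))) LinearMap.id ∘ₗ
              sig4L k U)) := by simp only [LinearMap.comp_assoc]
      _ = m2 mul ∘ₗ (TensorProduct.map (mR3 mul) LinearMap.id ∘ₗ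
            (sig4L k U ∘ₗ act4 k V U (tensorOne k V (Φ : V ⊗[k] (V ⊗[k] V))))) := by
          rw [C_tO k V U mul]
      _ = (m2 mul ∘ₗ (TensorProduct.map (mR3 mul) LinearMap.id ∘ₗ sig4L k U)) ∘ₗ
            act4 k V U (tensorOne k V (Φ : V ⊗[k] (V ⊗[k] V))) := by
          simp only [LinearMap.comp_assoc]
      _ = (mL3 mul ∘ₗ
            (TensorProduct.map LinearMap.id (TensorProduct.map (m2 mul) LinearMap.id) ∘ₗ
              rho4L k U)) ∘ₗ
            act4 k V U (tensorOne k V (Φ : V ⊗[k] (V ⊗[k] V))) := by rw [E3 k U mul]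
      _ = ((mR3 mul ∘ₗ act3 k V U (Φ : V ⊗[k] (V ⊗[k] V))) ∘ₗ
            (TensorProduct.map LinearMap.id (TensorProduct.map (m2 mul) LinearMap.id) ∘ₗ
              rho4L k U)) ∘ₗ
            act4 k V U (tensorOne k V (Φ : V ⊗[k] (V ⊗[k] V))) := by rw [hP]
      _ = (mR3 mul ∘ₗ (act3 k V U (Φ : V ⊗[k] (V ⊗[k] V)) ∘ₗ
            (TensorProduct.map LinearMap.id (TensorProduct.map (m2 mul) LinearMap.id) ∘ₗ
              rho4L k U))) ∘ₗ
            act4 k V U (tensorOne k V (Φ : V ⊗[k] (V ⊗[k] V))) := by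
          simp only [LinearMap.comp_assoc]
      _ = (mR3 mul ∘ₗ
            ((TensorProduct.map LinearMap.id (TensorProduct.map (m2 mul) LinearMap.id) ∘ₗ
              rho4L k U) ∘ₗ
              act4 k V U (deltaSecond k V Δ (Φ : V ⊗[k] (V ⊗[k] V))))) ∘ₗ
            act4 k V U (tensorOne k V (Φ : V ⊗[k] (V ⊗[k] V))) := by
          rw [C_dS k V U mul Δ hmodalg]
      _ = ((mR3 mul ∘ₗ
            (TensorProduct.map LinearMap.id (TensorProduct.map (m2 mul) LinearMap.id) ∘ₗ
              rho4L k U)) ∘ₗ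
            act4 k V U (deltaSecond k V Δ (Φ : V ⊗[k] (V ⊗[k] V)))) ∘ₗ
            act4 k V U (tensorOne k V (Φ : V ⊗[k] (V ⊗[k] V))) := by
          simp only [LinearMap.comp_assoc]
      _ = ((m2 mul ∘ₗ TensorProduct.map LinearMap.id (mL3 mul)) ∘ₗ
            act4 k V U (deltaSecond k V Δ (Φ : V ⊗[k] (V ⊗[k] V)))) ∘ₗ
            act4 k V U (tensorOne k V (Φ : V ⊗[k] (V ⊗[k] V))) := by rw [E4 k U mul]
      _ = ((m2 mul ∘ₗ
            TensorProduct.map LinearMap.id (mR3 mul ∘ₗ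
              act3 k V U (Φ : V ⊗[k] (V ⊗[k] V)))) ∘ₗ
            act4 k V U (deltaSecond k V Δ (Φ : V ⊗[k] (V ⊗[k] V)))) ∘ₗ
            act4 k V U (tensorOne k V (Φ : V ⊗[k] (V ⊗[k] V))) := by rw [hP]
      _ = ((m2 mul ∘ₗ
            (TensorProduct.map LinearMap.id (mR3 mul) ∘ₗ
              TensorProduct.map LinearMap.id
                (act3 k V U (Φ : V ⊗[k] (V ⊗[k] V))))) ∘ₗ
            act4 k V U (deltaSecond k V Δ (Φ : V ⊗[k] (V ⊗[k] V)))) ∘ₗ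
            act4 k V U (tensorOne k V (Φ : V ⊗[k] (V ⊗[k] V))) := by rw [Esplit2]
      _ = ((m2 mul ∘ₗ
            (TensorProduct.map LinearMap.id (mR3 mul) ∘ₗ
              act4 k V U (oneTensor k V (Φ : V ⊗[k] (V ⊗[k] V))))) ∘ₗ
            act4 k V U (deltaSecond k V Δ (Φ : V ⊗[k] (V ⊗[k] V)))) ∘ₗ
            act4 k V U (tensorOne k V (Φ : V ⊗[k] (V ⊗[k] V))) := by
          rw [C_oT k V U]
      _ = m2 mul ∘ₗ
            (TensorProduct.map LinearMap.id (mR3 mul) ∘ₗ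
              (act4 k V U (oneTensor k V (Φ : V ⊗[k] (V ⊗[k] V))) ∘ₗ
                (act4 k V U (deltaSecond k V Δ (Φ : V ⊗[k] (V ⊗[k] V))) ∘ₗ
                  act4 k V U (tensorOne k V (Φ : V ⊗[k] (V ⊗[k] V)))))) := by
          simp only [LinearMap.comp_assoc]
  -- the three units used in path B
  set uT : (V ⊗[k] (V ⊗[k] (V ⊗[k] V)))ˣ :=
    Units.map (tensorOne k V).toRingHom.toMonoidHom Φ with huT
  set uS : (V ⊗[k] (V ⊗[k] (V ⊗[k] V)))ˣ :=
    Units.map (deltaSecond k V Δ).toRingHom.toMonoidHom Φ with huS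
  set uO : (V ⊗[k] (V ⊗[k] (V ⊗[k] V)))ˣ :=
    Units.map (oneTensor k V).toRingHom.toMonoidHom Φ with huO
  set u3 : (V ⊗[k] (V ⊗[k] (V ⊗[k] V)))ˣ :=
    Units.map (deltaThird k V Δ).toRingHom.toMonoidHom Φ with hu3
  set u1 : (V ⊗[k] (V ⊗[k] (V ⊗[k] V)))ˣ :=
    Units.map (deltaFirst k V Δ).toRingHom.toMonoidHom Φ with hu1
  have hcT : ((uT : (V ⊗[k] (V ⊗[k] (V ⊗[k] V)))ˣ) : V ⊗[k] (V ⊗[k] (V ⊗[k] V)))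
      = tensorOne k V (Φ : V ⊗[k] (V ⊗[k] V)) := rfl
  have hcS : ((uS : (V ⊗[k] (V ⊗[k] (V ⊗[k] V)))ˣ) : V ⊗[k] (V ⊗[k] (V ⊗[k] V)))
      = deltaSecond k V Δ (Φ : V ⊗[k] (V ⊗[k] V)) := rfl
  have hcO : ((uO : (V ⊗[k] (V ⊗[k] (V ⊗[k] V)))ˣ) : V ⊗[k] (V ⊗[k] (V ⊗[k] V)))
      = oneTensor k V (Φ : V ⊗[k] (V ⊗[k] V)) := rfl
  have hc3 : ((u3 : (V ⊗[k] (V ⊗[k] (V ⊗[k] V)))ˣ) : V ⊗[k] (V ⊗[k] (V ⊗[k] V)))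
      = deltaThird k V Δ (Φ : V ⊗[k] (V ⊗[k] V)) := rfl
  have hc1 : ((u1 : (V ⊗[k] (V ⊗[k] (V ⊗[k] V)))ˣ) : V ⊗[k] (V ⊗[k] (V ⊗[k] V)))
      = deltaFirst k V Δ (Φ : V ⊗[k] (V ⊗[k] V)) := rfl
  have pathB' : ∀ s, mL4 mul s
      = (m2 mul ∘ₗ TensorProduct.map LinearMap.id (mR3 mul))
          (act4 k V U (((uO * uS * uT : (V ⊗[k] (V ⊗[k] (V ⊗[k] V)))ˣ) :
            V ⊗[k] (V ⊗[k] (V ⊗[k] V)))) s) := by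
    intro s
    have hval : ((uO * uS * uT : (V ⊗[k] (V ⊗[k] (V ⊗[k] V)))ˣ) :
        V ⊗[k] (V ⊗[k] (V ⊗[k] V)))
        = oneTensor k V (Φ : V ⊗[k] (V ⊗[k] V)) *
          deltaSecond k V Δ (Φ : V ⊗[k] (V ⊗[k] V)) *
          tensorOne k V (Φ : V ⊗[k] (V ⊗[k] V)) := by
      rw [Units.val_mul, Units.val_mul, hcO, hcS, hcT]
    rw [hval, act4_mul, act4_mul, pathB]
    simp only [LinearMap.comp_apply]
  have hSinv : ∀ s, (m2 mul ∘ₗ TensorProduct.map LinearMap.id (mR3 mul)) s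
      = mL4 mul (act4 k V U ((((uO * uS * uT)⁻¹ : (V ⊗[k] (V ⊗[k] (V ⊗[k] V)))ˣ) :
          V ⊗[k] (V ⊗[k] (V ⊗[k] V)))) s) := by
    intro s
    have h1 := pathB' (act4 k V U ((((uO * uS * uT)⁻¹ :
      (V ⊗[k] (V ⊗[k] (V ⊗[k] V)))ˣ) : V ⊗[k] (V ⊗[k] (V ⊗[k] V)))) s)
    have h2 : act4 k V U (((uO * uS * uT : (V ⊗[k] (V ⊗[k] (V ⊗[k] V)))ˣ) :
          V ⊗[k] (V ⊗[k] (V ⊗[k] V))))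
          (act4 k V U ((((uO * uS * uT)⁻¹ : (V ⊗[k] (V ⊗[k] (V ⊗[k] V)))ˣ) :
            V ⊗[k] (V ⊗[k] (V ⊗[k] V)))) s) = s := by
      rw [← LinearMap.comp_apply, ← act4_mul, Units.mul_inv, act4_one,
        LinearMap.id_apply]
    rw [h2] at h1
    exact h1.symm
  -- assemble
  have hPP : Pphi k V Δ Φ = (uO * uS * uT)⁻¹ * u3 * u1 := by
    rw [Pphi, ← huT, ← huS, ← huO, ← hu3, ← hu1, mul_inv_rev, mul_inv_rev]
    simp only [mul_assoc]
  calc mL4 mul t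
      = mR3 mul
          (TensorProduct.map LinearMap.id (TensorProduct.map LinearMap.id (m2 mul))
            (act4 k V U (deltaThird k V Δ (Φ : V ⊗[k] (V ⊗[k] V)))
              (act4 k V U (deltaFirst k V Δ (Φ : V ⊗[k] (V ⊗[k] V))) t))) := by
        rw [pathA]; simp only [LinearMap.comp_apply]
    _ = (m2 mul ∘ₗ TensorProduct.map LinearMap.id (mR3 mul))
          (act4 k V U (deltaThird k V Δ (Φ : V ⊗[k] (V ⊗[k] V)))
            (act4 k V U (deltaFirst k V Δ (Φ : V ⊗[k] (V ⊗[k] V))) t)) := by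
        rw [E5 k U mul]; simp only [LinearMap.comp_apply]
    _ = mL4 mul (act4 k V U ((((uO * uS * uT)⁻¹ :
          (V ⊗[k] (V ⊗[k] (V ⊗[k] V)))ˣ) : V ⊗[k] (V ⊗[k] (V ⊗[k] V))))
          (act4 k V U (deltaThird k V Δ (Φ : V ⊗[k] (V ⊗[k] V)))
            (act4 k V U (deltaFirst k V Δ (Φ : V ⊗[k] (V ⊗[k] V))) t))) := hSinv _
    _ = mL4 mul (act4 k V U ((Pphi k V Δ Φ :
          (V ⊗[k] (V ⊗[k] (V ⊗[k] V)))ˣ) : V ⊗[k] (V ⊗[k] (V ⊗[k] V))) t) := by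
        rw [hPP, Units.val_mul, Units.val_mul, hc3, hc1, act4_mul, act4_mul]
        simp only [LinearMap.comp_apply]


end
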